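/- Let k be a field and q ≥ 1 an integer such that q = 1 or q is a power of the characteristic of k. Suppose w_1, w_2 ∈ k[x_1,x_2] are homogeneous of the same degree and for infinitely many distinct scalars γ ∈ k there exist a homogeneous y_γ and scalars a_γ, b_γ with (x_1 + γx_2)^q y_γ = a_γ x_1^q w_1 + b_γ x_2^q w_2. Then either w_1 = c·w_2 for some scalar c, or w_1, w_2 ∈ (x_1^q, x_2^q). -/

import Mathlib

open MvPolynomial

section Aux

variable {k : Type*} [Field k]

private lemma stmt14_frob (q : ℕ) (hq1 : 1 ≤ q)
    (hq : q = 1 ∨ ∃ e : ℕ, q = ringChar k ^ e)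
    (u v : MvPolynomial (Fin 2) k) : (u + v) ^ q = u ^ q + v ^ q := by
  rcases hq with h1 | ⟨e, he⟩
  · simp [h1]
  · rcases eq_or_ne (ringChar k) 0 with h0 | h0
    · have hq1' : q = 1 := by
        rcases Nat.eq_zero_or_pos e with rfl | he'
        · simpa using he
        · rw [h0, zero_pow he'.ne'] at he; omega
      simp [hq1']
    · have hp : (ringChar k).Prime := CharP.char_prime_of_ne_zero k h0
      haveI := Fact.mk hp
      haveI := ringChar.charP k
      haveI : CharP (MvPolynomial (Fin 2) k) (ringChar k) := inferInstance
      subst he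
      exact add_pow_char_pow u v (ringChar k) e

private lemma stmt14_psi (γ : k) :
    (MvPolynomial.finSuccEquiv k 1) (X 0 + C γ * X 1) =
      Polynomial.X - Polynomial.C (-(C γ * X 0)) := by
  have h1 : (X 1 : MvPolynomial (Fin 2) k) = X (Fin.succ 0) := rfl
  have hC : (MvPolynomial.finSuccEquiv k 1) (C γ) = Polynomial.C (C γ) := by
    rw [← MvPolynomial.algebraMap_eq, AlgEquiv.commutes]
    rfl
  rw [map_add, map_mul, h1, finSuccEquiv_X_zero, finSuccEquiv_X_succ, hC,
    ← Polynomial.C_mul, map_neg, sub_neg_eq_add]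

private lemma stmt14_prime (γ : k) :
    Prime (X 0 + C γ * X 1 : MvPolynomial (Fin 2) k) := by
  have hp : Prime ((MvPolynomial.finSuccEquiv k 1) (X 0 + C γ * X 1)) := by
    rw [stmt14_psi γ]
    exact Polynomial.prime_X_sub_C _
  exact (MulEquiv.prime_iff (MvPolynomial.finSuccEquiv k 1)).mp hp

private lemma stmt14_not_dvd (γ : k) :
    ¬ (X 0 + C γ * X 1 : MvPolynomial (Fin 2) k) ∣ X 1 := by
  rintro ⟨u, hu⟩
  have := congrArg
    (aeval (![-(C γ * X 1), X 1] : Fin 2 → MvPolynomial (Fin 2) k)) hu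
  simp only [map_add, map_mul, aeval_X, aeval_C, algebraMap_eq, Matrix.cons_val_zero,
    Matrix.cons_val_one, Matrix.head_cons, neg_add_cancel, zero_mul] at this
  exact MvPolynomial.X_ne_zero 1 this

private lemma stmt14_zero_of_inf (f : MvPolynomial (Fin 2) k) (T : Set k) (hT : T.Infinite)
    (h : ∀ γ ∈ T, (X 0 + C γ * X 1 : MvPolynomial (Fin 2) k) ∣ f) : f = 0 := by
  classical
  by_contra hf
  set Ψ := MvPolynomial.finSuccEquiv k 1 with hΨ
  have hΨf : Ψ f ≠ 0 := by
    intro h0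
    exact hf (by simpa using (map_eq_zero_iff Ψ Ψ.injective).mp h0)
  have key : ∀ γ ∈ T, (-(C γ * X 0) : MvPolynomial (Fin 1) k) ∈ (Ψ f).roots := by
    intro γ hγ
    have hd := map_dvd Ψ (h γ hγ)
    rw [hΨ, stmt14_psi γ, Polynomial.dvd_iff_isRoot] at hd
    exact (Polynomial.mem_roots hΨf).mpr hd
  have hinj : Set.InjOn (fun γ : k => (-(C γ * X 0) : MvPolynomial (Fin 1) k)) T := by
    intro γ₁ _ γ₂ _ hEq
    simp only [neg_inj] at hEq
    have := mul_right_cancel₀ (MvPolynomial.X_ne_zero 0) hEq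
    exact MvPolynomial.C_injective _ _ this
  have hfin : T.Finite := by
    apply Set.Finite.of_finite_image _ hinj
    apply Set.Finite.subset ((Ψ f).roots.toFinset.finite_toSet)
    rintro x ⟨γ, hγ, rfl⟩
    exact Finset.mem_coe.mpr (Multiset.mem_toFinset.mpr (key γ hγ))
  exact hT hfin

end Aux

theorem stmt14 {k : Type*} [Field k] (q : ℕ) (hq1 : 1 ≤ q)
    (hq : q = 1 ∨ ∃ e : ℕ, q = ringChar k ^ e)
    (w₁ w₂ : MvPolynomial (Fin 2) k) (D : ℕ)
    (hw₁ : w₁.IsHomogeneous D) (hw₂ : w₂.IsHomogeneous D)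
    (S : Set k) (hS : S.Infinite)
    (hmain : ∀ γ ∈ S, ∃ (y : MvPolynomial (Fin 2) k) (e : ℕ) (a b : k),
      y ≠ 0 ∧ y.IsHomogeneous e ∧
      (X 0 + C γ * X 1) ^ q * y = C a * (X 0 ^ q * w₁) + C b * (X 1 ^ q * w₂)) :
    (∃ c : k, w₁ = c • w₂) ∨
      (w₁ ∈ Ideal.span {(X 0 : MvPolynomial (Fin 2) k) ^ q, X 1 ^ q} ∧
        w₂ ∈ Ideal.span {(X 0 : MvPolynomial (Fin 2) k) ^ q, X 1 ^ q}) := by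
  classical
  have hfrob := stmt14_frob (k := k) q hq1 hq
  have htq : ∀ γ : k, ((X 0 + C γ * X 1 : MvPolynomial (Fin 2) k)) ^ q
      = X 0 ^ q + C (γ ^ q) * X 1 ^ q := by
    intro γ
    rw [hfrob, mul_pow, ← C_pow]
  -- Step 1: for each γ ∈ S extract the divisibility
  have step : ∀ γ ∈ S, ∃ a b : k, (a ≠ 0 ∨ b ≠ 0) ∧
      ((X 0 + C γ * X 1 : MvPolynomial (Fin 2) k) ^ q ∣
        (C b * w₂ - C (a * γ ^ q) * w₁)) ∧
      (∃ y : MvPolynomial (Fin 2) k, y ≠ 0 ∧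
        (X 0 + C γ * X 1) ^ q * y = C a * (X 0 ^ q * w₁) + C b * (X 1 ^ q * w₂)) := by
    intro γ hγ
    obtain ⟨y, e, a, b, hy0, _, heq⟩ := hmain γ hγ
    have htne : (X 0 + C γ * X 1 : MvPolynomial (Fin 2) k) ≠ 0 := (stmt14_prime γ).ne_zero
    refine ⟨a, b, ?_, ?_, y, hy0, heq⟩
    · by_contra h
      push_neg at h
      obtain ⟨rfl, rfl⟩ := h
      simp only [map_zero, zero_mul, add_zero, zero_add] at heq
      rcases mul_eq_zero.mp heq with h' | h'
      · exact pow_ne_zero _ htne h'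
      · exact hy0 h'
    · have key : (X 0 + C γ * X 1 : MvPolynomial (Fin 2) k) ^ q * (y - C a * w₁)
          = X 1 ^ q * (C b * w₂ - C (a * γ ^ q) * w₁) := by
        have hX0 : (X 0 : MvPolynomial (Fin 2) k) ^ q
            = (X 0 + C γ * X 1) ^ q - C (γ ^ q) * X 1 ^ q := by
          rw [htq γ]; ring
        rw [mul_sub, heq, hX0, map_mul, C_pow]
        ring
      have hdvd : (X 0 + C γ * X 1 : MvPolynomial (Fin 2) k) ^ q ∣
          X 1 ^ q * (C b * w₂ - C (a * γ ^ q) * w₁) := ⟨_, key.symm⟩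
      refine (stmt14_prime γ).pow_dvd_of_dvd_mul_left q ?_ hdvd
      intro hdx
      exact stmt14_not_dvd γ ((stmt14_prime γ).dvd_of_dvd_pow hdx)
  choose a b hab hdvd hy using step
  -- the ideal
  set I : Ideal (MvPolynomial (Fin 2) k) :=
    Ideal.span {(X 0 : MvPolynomial (Fin 2) k) ^ q, X 1 ^ q} with hI
  have hmI : ∀ γ (hγ : γ ∈ S),
      (C (b γ hγ) * w₂ - C (a γ hγ * γ ^ q) * w₁) ∈ I := by
    intro γ hγ
    obtain ⟨c, hc⟩ := hdvd γ hγ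
    rw [hI, Ideal.mem_span_pair]
    refine ⟨c, C (γ ^ q) * c, ?_⟩
    rw [hc, htq γ]; ring
  by_cases hind : ∃ γ, ∃ hγ : γ ∈ S, ∃ γ', ∃ hγ' : γ' ∈ S,
      (a γ hγ * γ ^ q) * (b γ' hγ') - (a γ' hγ' * γ' ^ q) * (b γ hγ) ≠ 0
  · -- two independent relations: both w₁, w₂ lie in the ideal
    obtain ⟨γ, hγ, γ', hγ', hd⟩ := hind
    right
    set A := a γ hγ * γ ^ q with hA
    set B := b γ hγ with hB
    set A' := a γ' hγ' * γ' ^ q with hA'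
    set B' := b γ' hγ' with hB'
    set m : MvPolynomial (Fin 2) k := C B * w₂ - C A * w₁ with hm
    set m' : MvPolynomial (Fin 2) k := C B' * w₂ - C A' * w₁ with hm'
    have hmem : m ∈ I := hmI γ hγ
    have hmem' : m' ∈ I := hmI γ' hγ'
    set d := A * B' - A' * B with hd'
    have hkey1 : C d * w₁ = C B * m' - C B' * m := by
      rw [hm, hm', hd']
      simp only [map_sub, map_mul]
      ring
    have hkey2 : C d * w₂ = C A * m' - C A' * m := by
      rw [hm, hm', hd']
      simp only [map_sub, map_mul]
      ring
    constructor
    · have hw : w₁ = C d⁻¹ * (C d * w₁) := by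
        rw [← mul_assoc, ← map_mul, inv_mul_cancel₀ hd, map_one, one_mul]
      rw [hw, hkey1]
      exact Ideal.mul_mem_left _ _ (Ideal.sub_mem _
        (Ideal.mul_mem_left _ _ hmem') (Ideal.mul_mem_left _ _ hmem))
    · have hw : w₂ = C d⁻¹ * (C d * w₂) := by
        rw [← mul_assoc, ← map_mul, inv_mul_cancel₀ hd, map_one, one_mul]
      rw [hw, hkey2]
      exact Ideal.mul_mem_left _ _ (Ideal.sub_mem _
        (Ideal.mul_mem_left _ _ hmem') (Ideal.mul_mem_left _ _ hmem))
  · -- all relations proportional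
    push_neg at hind
    left
    have hS0 : (S \ {0} : Set k).Infinite := hS.diff (Set.finite_singleton 0)
    obtain ⟨γ₀, hγ₀, hγ₀ne'⟩ := hS0.nonempty
    have hγ₀S : γ₀ ∈ S := hγ₀
    have hγ₀ne : γ₀ ≠ 0 := fun h => hγ₀ne' (by simp [h])
    set A := a γ₀ hγ₀S * γ₀ ^ q with hA
    set B := b γ₀ hγ₀S with hB
    set f : MvPolynomial (Fin 2) k := C B * w₂ - C A * w₁ with hf
    have hfd : ∀ γ ∈ (S \ {0} : Set k), (X 0 + C γ * X 1 : MvPolynomial (Fin 2) k) ∣ f := by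
      rintro γ ⟨hγ, hγ0'⟩
      have hγ0 : γ ≠ 0 := hγ0'
      have hdet := hind γ hγ γ₀ hγ₀S
      have hC : C (a γ hγ * γ ^ q) * C B - C A * C (b γ hγ)
          = (0 : MvPolynomial (Fin 2) k) := by
        rw [← map_mul, ← map_mul, ← map_sub, hdet, map_zero]
      have ht := hdvd γ hγ
      have hpowdvd : (X 0 + C γ * X 1 : MvPolynomial (Fin 2) k) ^ q ∣ f := by
        rcases hab γ hγ with haγ | hbγ
        · have hc : C (a γ hγ * γ ^ q) * f
              = C A * (C (b γ hγ) * w₂ - C (a γ hγ * γ ^ q) * w₁) := by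
            rw [hf]
            linear_combination w₂ * hC
          have hu : IsUnit (C (a γ hγ * γ ^ q) : MvPolynomial (Fin 2) k) :=
            ((mul_ne_zero haγ (pow_ne_zero q hγ0)).isUnit).map (C : k →+* MvPolynomial (Fin 2) k)
          have : (X 0 + C γ * X 1 : MvPolynomial (Fin 2) k) ^ q
              ∣ C (a γ hγ * γ ^ q) * f := by
            rw [hc]; exact Dvd.dvd.mul_left ht _
          exact (hu.dvd_mul_left).mp this
        · have hc : C (b γ hγ) * f
              = C B * (C (b γ hγ) * w₂ - C (a γ hγ * γ ^ q) * w₁) := by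
            rw [hf]
            linear_combination w₁ * hC
          have hu : IsUnit (C (b γ hγ) : MvPolynomial (Fin 2) k) :=
            (hbγ.isUnit).map (C : k →+* MvPolynomial (Fin 2) k)
          have : (X 0 + C γ * X 1 : MvPolynomial (Fin 2) k) ^ q ∣ C (b γ hγ) * f := by
            rw [hc]; exact Dvd.dvd.mul_left ht _
          exact (hu.dvd_mul_left).mp this
      exact dvd_trans (dvd_pow_self _ (by omega)) hpowdvd
    have hf0 : f = 0 := stmt14_zero_of_inf f _ hS0 hfd
    by_cases hA0 : A = 0
    · -- degenerate case: leads to a contradiction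
      exfalso
      have haγ₀ : a γ₀ hγ₀S = 0 := by
        rcases mul_eq_zero.mp hA0 with h' | h'
        · exact h'
        · exact absurd h' (pow_ne_zero q hγ₀ne)
      have hB0 : B ≠ 0 := by
        rcases hab γ₀ hγ₀S with h' | h'
        · exact absurd haγ₀ h'
        · exact h'
      have hw2 : w₂ = 0 := by
        have h0 : C B * w₂ = 0 := by
          rw [hf, hA0, map_zero, zero_mul, sub_zero] at hf0
          exact hf0
        rcases mul_eq_zero.mp h0 with h' | h'
        · exact absurd (C_eq_zero.mp h') hB0
        · exact h'
      obtain ⟨y, hy0, heq⟩ := hy γ₀ hγ₀S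
      rw [haγ₀, hw2] at heq
      simp only [map_zero, zero_mul, mul_zero, add_zero, zero_add] at heq
      rcases mul_eq_zero.mp heq with h' | h'
      · exact pow_ne_zero _ (stmt14_prime γ₀).ne_zero h'
      · exact hy0 h'
    · refine ⟨A⁻¹ * B, ?_⟩
      have hmain' : C B * w₂ = C A * w₁ := sub_eq_zero.mp (by rw [← hf]; exact hf0)
      calc w₁ = C A⁻¹ * (C A * w₁) := by
              rw [← mul_assoc, ← map_mul, inv_mul_cancel₀ hA0, map_one, one_mul]
        _ = C A⁻¹ * (C B * w₂) := by rw [hmain']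
        _ = (A⁻¹ * B) • w₂ := by
              rw [smul_eq_C_mul, map_mul, mul_assoc]
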